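/- Let A be a Hermitian operator on a finite-dimensional inner product space H with eigenvalues in [0,1]. Then there exist subspaces X and Y of H² = H ⊕ H and orthogonal projectors P_X, P_Y such that A is unitarily equivalent to the restriction (P_X P_Y)|_X of P_X P_Y to its invariant subspace X. -/

import Mathlib

/-- The orthogonal projector onto the subspace `K`, as an operator `E →L[ℂ] E`. -/
noncomputable def proj {E : Type*} [NormedAddCommGroup E] [InnerProductSpace ℂ E]
    [FiniteDimensional ℂ E] (K : Submodule ℂ E) : E →L[ℂ] E :=
  K.subtypeL.comp (Submodule.orthogonalProjection K)

open scoped InnerProductSpace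

set_option synthInstance.maxHeartbeats 1000000
set_option maxHeartbeats 2000000

/-- Let `A` be a self-adjoint operator on a finite-dimensional inner product space `H`
with all eigenvalues in `[0,1]`. Then there are subspaces `X`, `Y` of `H² = H ⊕ H`
(with the `ℓ²` inner product) such that `X` is invariant under `P_X P_Y` and `A` is
unitarily equivalent to the restriction `(P_X P_Y)|_X`: there is a unitary `U : H ≃ X`
with `(P_X P_Y)(U v) = U (A v)` for all `v`. -/
theorem hermitian_unitarily_equiv_proj_restriction {H : Type*} [NormedAddCommGroup H]
    [InnerProductSpace ℂ H] [FiniteDimensional ℂ H]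
    (A : H →L[ℂ] H) (hA : IsSelfAdjoint A)
    (heig : ∀ (μ : ℝ) (v : H), v ≠ 0 → A v = (μ : ℂ) • v → μ ∈ Set.Icc (0 : ℝ) 1) :
    ∃ X Y : Submodule ℂ (WithLp 2 (H × H)),
      (∀ v ∈ X, (proj X) ((proj Y) v) ∈ X) ∧
      ∃ U : H ≃ₗᵢ[ℂ] X, ∀ v : H,
        (proj X) ((proj Y) (U v : WithLp 2 (H × H))) = (U (A v) : WithLp 2 (H × H)) := by
  classical
  -- Step 1: 0 ≤ A and A ≤ 1
  have hS : (A : H →ₗ[ℂ] H).IsSymmetric :=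
    (ContinuousLinearMap.isSelfAdjoint_iff_isSymmetric).mp hA
  set n := Module.finrank ℂ H with hn'
  have hn : Module.finrank ℂ H = n := rfl
  let b : OrthonormalBasis (Fin n) ℂ H := hS.eigenvectorBasis hn
  let μ : Fin n → ℝ := hS.eigenvalues hn
  have hμ : ∀ i, μ i ∈ Set.Icc (0:ℝ) 1 := by
    intro i
    have h1 := hS.hasEigenvector_eigenvectorBasis hn i
    exact heig (μ i) (b i) h1.2 (hS.apply_eigenvectorBasis hn i)
  have key : ∀ x : H, ⟪A x, x⟫_ℂ = ∑ i, ((μ i * ‖⟪b i, x⟫_ℂ‖^2 : ℝ) : ℂ) := by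
    intro x
    rw [← b.sum_inner_mul_inner (A x) x]
    congr 1; ext i
    have h1 : ⟪A x, b i⟫_ℂ = (μ i : ℂ) * ⟪x, b i⟫_ℂ := by
      have h0 := hS x (b i)
      rw [ContinuousLinearMap.coe_coe] at h0
      rw [h0, show A (b i) = ((μ i : ℝ) : ℂ) • b i from hS.apply_eigenvectorBasis hn i,
        inner_smul_right]
    rw [h1]
    have h2 : ⟪x, b i⟫_ℂ * ⟪b i, x⟫_ℂ = ((‖⟪b i, x⟫_ℂ‖^2 : ℝ) : ℂ) := by
      rw [← inner_conj_symm x (b i), RCLike.conj_mul]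
      norm_cast
    rw [mul_assoc, h2]
    push_cast
    ring
  have keyx : ∀ x : H, ⟪x, x⟫_ℂ = ∑ i, ((‖⟪b i, x⟫_ℂ‖^2 : ℝ) : ℂ) := by
    intro x
    rw [← b.sum_inner_mul_inner x x]
    congr 1; ext i
    rw [← inner_conj_symm x (b i), RCLike.conj_mul]
    norm_cast
  have hApos : 0 ≤ A := by
    rw [ContinuousLinearMap.nonneg_iff_isPositive]
    refine ⟨hS, fun x => ?_⟩
    have hx : ⟪A x, x⟫_ℂ = ((∑ i, μ i * ‖⟪b i, x⟫_ℂ‖^2 : ℝ) : ℂ) := by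
      rw [key x]; push_cast; rfl
    rw [ContinuousLinearMap.reApplyInnerSelf_apply, hx]
    simp only [RCLike.re_to_complex, Complex.ofReal_re]
    exact Finset.sum_nonneg fun i _ => mul_nonneg (hμ i).1 (sq_nonneg _)
  have hA1 : A ≤ 1 := by
    rw [ContinuousLinearMap.le_def]
    have hone : IsSelfAdjoint (1 - A : H →L[ℂ] H) := by
      rw [IsSelfAdjoint, star_sub, star_one, hA.star_eq]
    refine ⟨(ContinuousLinearMap.isSelfAdjoint_iff_isSymmetric).mp hone, fun x => ?_⟩
    have hx : ⟪(1 - A : H →L[ℂ] H) x, x⟫_ℂ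
        = ((∑ i, (1 - μ i) * ‖⟪b i, x⟫_ℂ‖^2 : ℝ) : ℂ) := by
      rw [ContinuousLinearMap.sub_apply, inner_sub_left, key x,
        ContinuousLinearMap.one_apply, keyx x]
      push_cast
      rw [← Finset.sum_sub_distrib]
      congr 1; ext i; ring
    rw [ContinuousLinearMap.reApplyInnerSelf_apply, hx]
    simp only [RCLike.re_to_complex, Complex.ofReal_re]
    exact Finset.sum_nonneg fun i _ => mul_nonneg (by linarith [(hμ i).2]) (sq_nonneg _)
  -- Step 2: square roots
  have hA1' : 0 ≤ 1 - A := sub_nonneg.mpr hA1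
  set B := CFC.sqrt A with hBdef
  set C := CFC.sqrt (1 - A) with hCdef
  have hBpos : 0 ≤ B := CFC.sqrt_nonneg (a := A)
  have hCpos : 0 ≤ C := CFC.sqrt_nonneg (a := 1 - A)
  have hBsa : IsSelfAdjoint B := hBpos.isSelfAdjoint
  have hCsa : IsSelfAdjoint C := hCpos.isSelfAdjoint
  have hB2 : B * B = A := by rw [← sq, hBdef, CFC.sq_sqrt A hApos]
  have hC2 : C * C = 1 - A := by rw [← sq, hCdef, CFC.sq_sqrt (1 - A) hA1']
  have hBC : ∀ s : H, B (B s) + C (C s) = s := by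
    intro s
    have hsum : B * B + C * C = 1 := by rw [hB2, hC2]; abel
    have h : (B * B + C * C) s = (1 : H →L[ℂ] H) s := by rw [hsum]
    simpa [ContinuousLinearMap.add_apply, ContinuousLinearMap.mul_apply] using h
  have hBsymm : ∀ x y : H, ⟪B x, y⟫_ℂ = ⟪x, B y⟫_ℂ := fun x y => by
    have := (ContinuousLinearMap.isSelfAdjoint_iff_isSymmetric).mp hBsa x y
    simpa using this
  have hCsymm : ∀ x y : H, ⟪C x, y⟫_ℂ = ⟪x, C y⟫_ℂ := fun x y => by
    have := (ContinuousLinearMap.isSelfAdjoint_iff_isSymmetric).mp hCsa x y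
    simpa using this
  -- Step 3: construction
  let e : WithLp 2 (H × H) ≃ₗ[ℂ] H × H := WithLp.linearEquiv 2 ℂ (H × H)
  let L1 : H →ₗ[ℂ] WithLp 2 (H × H) := e.symm.toLinearMap ∘ₗ LinearMap.inl ℂ H H
  let T : H →ₗ[ℂ] WithLp 2 (H × H) :=
    e.symm.toLinearMap ∘ₗ ((B : H →ₗ[ℂ] H).prod (C : H →ₗ[ℂ] H))
  have hL1 : ∀ x : H, (L1 x : WithLp 2 (H × H)).fst = x ∧ (L1 x).snd = 0 :=
    fun x => ⟨rfl, rfl⟩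
  have hT : ∀ x : H, (T x : WithLp 2 (H × H)).fst = B x ∧ (T x).snd = C x :=
    fun x => ⟨rfl, rfl⟩
  set X : Submodule ℂ (WithLp 2 (H × H)) := LinearMap.range L1 with hXdef
  set Y : Submodule ℂ (WithLp 2 (H × H)) := LinearMap.range T with hYdef
  -- projection formulas
  have projX : ∀ u : WithLp 2 (H × H), proj X u = L1 u.fst := by
    intro u
    show (X.subtypeL (Submodule.orthogonalProjection X u) : WithLp 2 (H × H)) = _
    rw [Submodule.subtypeL_apply, ← Submodule.starProjection_apply]
    apply Submodule.eq_starProjection_of_mem_of_inner_eq_zero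
    · exact ⟨u.fst, rfl⟩
    · rintro w ⟨a, rfl⟩
      rw [WithLp.prod_inner_apply]
      simp only [WithLp.ofLp_fst, WithLp.ofLp_snd]
      have h1 : (u - L1 u.fst).fst = 0 := by
        show u.fst - (L1 u.fst).fst = 0
        rw [(hL1 u.fst).1, sub_self]
      have h2 : (u - L1 u.fst).snd = u.snd := by
        show u.snd - (L1 u.fst).snd = u.snd
        rw [(hL1 u.fst).2, sub_zero]
      rw [h1, h2, (hL1 a).1, (hL1 a).2, inner_zero_left, inner_zero_right, add_zero]
  have projY : ∀ u : WithLp 2 (H × H), proj Y u = T (B u.fst + C u.snd) := by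
    intro u
    show (Y.subtypeL (Submodule.orthogonalProjection Y u) : WithLp 2 (H × H)) = _
    rw [Submodule.subtypeL_apply, ← Submodule.starProjection_apply]
    apply Submodule.eq_starProjection_of_mem_of_inner_eq_zero
    · exact ⟨_, rfl⟩
    · rintro w ⟨a, rfl⟩
      set s := B u.fst + C u.snd with hs
      rw [WithLp.prod_inner_apply]
      simp only [WithLp.ofLp_fst, WithLp.ofLp_snd]
      have h1 : (u - T s).fst = u.fst - B s := by
        show u.fst - (T s).fst = _
        rw [(hT s).1]
      have h2 : (u - T s).snd = u.snd - C s := by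
        show u.snd - (T s).snd = _
        rw [(hT s).2]
      rw [h1, h2, (hT a).1, (hT a).2, ← hBsymm (u.fst - B s) a,
        ← hCsymm (u.snd - C s) a, ← inner_add_left]
      have h3 : B (u.fst - B s) + C (u.snd - C s) = 0 := by
        rw [map_sub, map_sub]
        have h4 : B u.fst - B (B s) + (C u.snd - C (C s))
            = (B u.fst + C u.snd) - (B (B s) + C (C s)) := by abel
        rw [h4, hBC s, ← hs, sub_self]
      rw [h3, inner_zero_left]
  refine ⟨X, Y, ?_, ?_⟩
  · intro v _
    rw [projX]
    exact ⟨_, rfl⟩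
  · have hinj : Function.Injective L1 := by
      intro a b h
      have := congrArg (fun z : WithLp 2 (H × H) => z.fst) h
      simpa [(hL1 a).1, (hL1 b).1] using this
    let U0 : H ≃ₗ[ℂ] X := LinearEquiv.ofInjective L1 hinj
    have hU0 : ∀ x : H, (U0 x : WithLp 2 (H × H)) = L1 x := fun x => rfl
    refine ⟨U0.isometryOfInner ?_, ?_⟩
    · intro x y
      show ⟪(U0 x : WithLp 2 (H × H)), (U0 y : WithLp 2 (H × H))⟫_ℂ = ⟪x, y⟫_ℂ
      rw [hU0, hU0, WithLp.prod_inner_apply, WithLp.ofLp_fst, WithLp.ofLp_fst, WithLp.ofLp_snd,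
        WithLp.ofLp_snd, (hL1 x).1, (hL1 y).1, (hL1 x).2,
        (hL1 y).2, inner_zero_left, add_zero]
    · intro v
      show proj X (proj Y (U0 v : WithLp 2 (H × H))) = (U0 (A v) : WithLp 2 (H × H))
      rw [hU0, hU0, projY, projX, (hL1 v).1, (hL1 v).2, map_zero, add_zero,
        (hT (B v)).1]
      have hBB : B (B v) = A v := by rw [← ContinuousLinearMap.mul_apply, hB2]
      rw [hBB]
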